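/- For every positive integer n divisible by 66, there exists a K4-free simple graph H' on n vertices that contains a triangle, has exactly n²/4 edges, and satisfies f(H') = 2n²/33 − 3n/11. -/

import Mathlib

open SimpleGraph

/-- `{u, v}` is a `K₄`-saturating edge of `G`: `u ≠ v`, `u` and `v` are nonadjacent, and
adding the edge `uv` to `G` creates a copy of `K₄`. -/
def SatEdge {V : Type*} (G : SimpleGraph V) (u v : V) : Prop :=
  u ≠ v ∧ ¬ G.Adj u v ∧ ¬ (G ⊔ SimpleGraph.fromEdgeSet {s(u, v)}).CliqueFree 4

/-- `f G`: the number of `K₄`-saturating edges of `G`. -/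
noncomputable def satCount {V : Type*} (G : SimpleGraph V) : ℕ :=
  {e : Sym2 V | ∃ u v, e = s(u, v) ∧ SatEdge G u v}.ncard

open Finset


def B5 : Fin 5 → Fin 5 → Bool := fun i j =>
  decide ((i.val, j.val) ∈ [(0,1),(1,0),(1,2),(2,1),(2,3),(3,2),(3,4),(4,3),(4,0),(0,4),(0,2),(2,0)])

def pt (m k : ℕ) : Fin 5 :=
  if k < 16*m then 0 else if k < 20*m then 1 else if k < 36*m then 2 else if k < 51*m then 3 else 4

def Gm (m : ℕ) : SimpleGraph (Fin (66*m)) where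
  Adj u v := B5 (pt m u.val) (pt m v.val) = true
  symm := by
    have h : ∀ i j, B5 i j = B5 j i := by decide
    refine ⟨fun u v hv => ?_⟩; rw [h]; exact hv
  loopless := by
    have h : ∀ i, B5 i i = false := by decide
    refine ⟨fun u hv => ?_⟩; simp [h] at hv

lemma Gm_adj (m : ℕ) (u v : Fin (66*m)) :
    (Gm m).Adj u v ↔ B5 (pt m u.val) (pt m v.val) = true := Iff.rfl

instance (m : ℕ) : DecidableRel (Gm m).Adj := fun _ _ =>
  inferInstanceAs (Decidable (_ = true))

lemma sum_chunk {M : Type*} [AddCommMonoid M] (f : ℕ → M) (a b : ℕ) (c : M)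
    (h : ∀ k, a ≤ k → k < b → f k = c) :
    ∑ k ∈ Finset.Ico a b, f k = (b - a) • c := by
  rw [Finset.sum_congr rfl (fun k hk => h k (Finset.mem_Ico.mp hk).1 (Finset.mem_Ico.mp hk).2)]
  simp [Finset.sum_const, Nat.card_Ico]

lemma sumPart (m : ℕ) (f : Fin 5 → ℕ) :
    ∑ k ∈ Finset.range (66*m), f (pt m k) =
      16*m * f 0 + 4*m * f 1 + 16*m * f 2 + 15*m * f 3 + 15*m * f 4 := by
  have e1 : ∑ k ∈ Finset.Ico 0 (16*m), f (pt m k) = (16*m - 0) • f 0 :=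
    sum_chunk _ _ _ _ (fun k h1 h2 => by simp [pt, h2])
  have e2 : ∑ k ∈ Finset.Ico (16*m) (20*m), f (pt m k) = (20*m - 16*m) • f 1 :=
    sum_chunk _ _ _ _ (fun k h1 h2 => by
      simp [pt, show ¬ k < 16*m by omega, h2])
  have e3 : ∑ k ∈ Finset.Ico (20*m) (36*m), f (pt m k) = (36*m - 20*m) • f 2 :=
    sum_chunk _ _ _ _ (fun k h1 h2 => by
      simp [pt, show ¬ k < 16*m by omega, show ¬ k < 20*m by omega, h2])
  have e4 : ∑ k ∈ Finset.Ico (36*m) (51*m), f (pt m k) = (51*m - 36*m) • f 3 :=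
    sum_chunk _ _ _ _ (fun k h1 h2 => by
      simp [pt, show ¬ k < 16*m by omega, show ¬ k < 20*m by omega,
        show ¬ k < 36*m by omega, h2])
  have e5 : ∑ k ∈ Finset.Ico (51*m) (66*m), f (pt m k) = (66*m - 51*m) • f 4 :=
    sum_chunk _ _ _ _ (fun k h1 h2 => by
      simp [pt, show ¬ k < 16*m by omega, show ¬ k < 20*m by omega,
        show ¬ k < 36*m by omega, show ¬ k < 51*m by omega])
  have c1 : (16*m : ℕ) ≤ 20*m := by omega
  have c2 : (20*m : ℕ) ≤ 36*m := by omega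
  have c3 : (36*m : ℕ) ≤ 51*m := by omega
  have c4 : (51*m : ℕ) ≤ 66*m := by omega
  rw [Finset.range_eq_Ico,
    ← Finset.sum_Ico_consecutive (fun k => f (pt m k)) (Nat.zero_le (16*m)) (by omega : 16*m ≤ 66*m),
    ← Finset.sum_Ico_consecutive (fun k => f (pt m k)) c1 (by omega : 20*m ≤ 66*m),
    ← Finset.sum_Ico_consecutive (fun k => f (pt m k)) c2 (by omega : 36*m ≤ 66*m),
    ← Finset.sum_Ico_consecutive (fun k => f (pt m k)) c3 c4,
    e1, e2, e3, e4, e5]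
  have d1 : 16*m - 0 = 16*m := by omega
  have d2 : 20*m - 16*m = 4*m := by omega
  have d3 : 36*m - 20*m = 16*m := by omega
  have d4 : 51*m - 36*m = 15*m := by omega
  have d5 : 66*m - 51*m = 15*m := by omega
  rw [d1, d2, d3, d4, d5]
  simp only [smul_eq_mul]
  ring

lemma cnt_eq (m : ℕ) (j : Fin 5) :
    (Finset.univ.filter (fun w : Fin (66*m) => pt m w.val = j)).card
      = ![16*m, 4*m, 16*m, 15*m, 15*m] j := by
  rw [Finset.card_filter]
  rw [Fin.sum_univ_eq_sum_range (fun k => if pt m k = j then 1 else 0)]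
  rw [sumPart m (fun i => if i = j then 1 else 0)]
  fin_cases j <;> simp

lemma degGm (m : ℕ) (v : Fin (66*m)) :
    (Gm m).degree v = ![35*m, 32*m, 35*m, 31*m, 31*m] (pt m v.val) := by
  rw [← SimpleGraph.card_neighborFinset_eq_degree, SimpleGraph.neighborFinset_eq_filter,
    Finset.card_filter]
  simp only [Gm_adj]
  rw [Fin.sum_univ_eq_sum_range (fun k => if B5 (pt m v.val) (pt m k) = true then 1 else 0)]
  rw [sumPart m (fun i => if B5 (pt m v.val) i = true then 1 else 0)]
  generalize pt m v.val = j
  fin_cases j <;> simp [B5, show ((0:Fin 5)).val = 0 from rfl, show ((1:Fin 5)).val = 1 from rfl, show ((2:Fin 5)).val = 2 from rfl, show ((3:Fin 5)).val = 3 from rfl, show ((4:Fin 5)).val = 4 from rfl, Prod.ext_iff] <;> ring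

lemma sum_degGm (m : ℕ) : ∑ v : Fin (66*m), (Gm m).degree v = 2178 * (m*m) := by
  have h : ∀ v : Fin (66*m), (Gm m).degree v
      = (fun j => ![35*m, 32*m, 35*m, 31*m, 31*m] j) (pt m v.val) := degGm m
  rw [Finset.sum_congr rfl (fun v _ => h v)]
  rw [Fin.sum_univ_eq_sum_range (fun k => ![35*m, 32*m, 35*m, 31*m, 31*m] (pt m k))]
  rw [sumPart m (![35*m, 32*m, 35*m, 31*m, 31*m])]
  simp
  ring

lemma edge_card_Gm (m : ℕ) : (Gm m).edgeFinset.card = 1089 * (m*m) := by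
  have h := SimpleGraph.sum_degrees_eq_twice_card_edges (Gm m)
  rw [sum_degGm] at h
  omega

def Km (m : ℕ) : SimpleGraph (Fin (66*m)) where
  Adj u v := u ≠ v ∧ pt m u.val = pt m v.val ∧ (pt m u.val).val < 3
  symm := ⟨by rintro u v ⟨h1, h2, h3⟩; exact ⟨h1.symm, h2.symm, h2 ▸ h3⟩⟩
  loopless := ⟨fun u h => h.1 rfl⟩

lemma Km_adj (m : ℕ) (u v : Fin (66*m)) :
    (Km m).Adj u v ↔ u ≠ v ∧ pt m u.val = pt m v.val ∧ (pt m u.val).val < 3 := Iff.rfl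

instance (m : ℕ) : DecidableRel (Km m).Adj := fun _ _ =>
  inferInstanceAs (Decidable (_ ∧ _ ∧ _))

lemma degKm (m : ℕ) (v : Fin (66*m)) :
    (Km m).degree v = (fun j : Fin 5 =>
      if j.val < 3 then ![16*m, 4*m, 16*m, 15*m, 15*m] j - 1 else 0) (pt m v.val) := by
  simp only
  by_cases hp : (pt m v.val).val < 3
  · rw [if_pos hp, ← cnt_eq m (pt m v.val), ← SimpleGraph.card_neighborFinset_eq_degree]
    have he : (Km m).neighborFinset v
        = (Finset.univ.filter (fun w : Fin (66*m) => pt m w.val = pt m v.val)).erase v := by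
      ext w
      simp only [SimpleGraph.mem_neighborFinset, Km_adj, Finset.mem_erase, Finset.mem_filter,
        Finset.mem_univ, true_and]
      constructor
      · rintro ⟨h1, h2, -⟩; exact ⟨h1.symm, h2.symm⟩
      · rintro ⟨h1, h2⟩; exact ⟨h1.symm, h2.symm, hp⟩
    rw [he, Finset.card_erase_of_mem (by simp)]
  · rw [if_neg hp, ← SimpleGraph.card_neighborFinset_eq_degree]
    have he : (Km m).neighborFinset v = ∅ := by
      ext w
      simp only [SimpleGraph.mem_neighborFinset, Km_adj, Finset.notMem_empty, iff_false]
      rintro ⟨-, -, h3⟩; exact hp h3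
    rw [he, Finset.card_empty]

lemma sum_degKm (m : ℕ) : ∑ v : Fin (66*m), (Km m).degree v
    = 16*m * (16*m - 1) + 4*m * (4*m - 1) + 16*m * (16*m - 1) := by
  rw [Finset.sum_congr rfl (fun v _ => degKm m v)]
  rw [Fin.sum_univ_eq_sum_range (fun k => (fun j : Fin 5 =>
      if j.val < 3 then ![16*m, 4*m, 16*m, 15*m, 15*m] j - 1 else 0) (pt m k))]
  rw [sumPart m (fun j : Fin 5 => if j.val < 3 then ![16*m, 4*m, 16*m, 15*m, 15*m] j - 1 else 0)]
  norm_num [show ((3:Fin 5)).val = 3 from rfl, show ((4:Fin 5)).val = 4 from rfl,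
    show (![16*m, 4*m, 16*m, 15*m, 15*m] 2) = 16*m from rfl]

lemma Gm_free (m : ℕ) : (Gm m).CliqueFree 4 := by
  intro t ht
  obtain ⟨ht1, ht2⟩ := ht
  obtain ⟨a, ha⟩ := Finset.card_pos.mp (by omega : 0 < t.card)
  have h3 : (t.erase a).card = 3 := by rw [Finset.card_erase_of_mem ha, ht2]
  obtain ⟨b, c, d, hbc, hbd, hcd, he⟩ := Finset.card_eq_three.mp h3
  have hb : b ≠ a ∧ b ∈ t := Finset.mem_erase.mp (by rw [he]; simp)
  have hc : c ≠ a ∧ c ∈ t := Finset.mem_erase.mp (by rw [he]; simp)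
  have hd : d ≠ a ∧ d ∈ t := Finset.mem_erase.mp (by rw [he]; simp)
  have Aab := ht1 (Finset.mem_coe.mpr ha) (Finset.mem_coe.mpr hb.2) hb.1.symm
  have Aac := ht1 (Finset.mem_coe.mpr ha) (Finset.mem_coe.mpr hc.2) hc.1.symm
  have Aad := ht1 (Finset.mem_coe.mpr ha) (Finset.mem_coe.mpr hd.2) hd.1.symm
  have Abc := ht1 (Finset.mem_coe.mpr hb.2) (Finset.mem_coe.mpr hc.2) hbc
  have Abd := ht1 (Finset.mem_coe.mpr hb.2) (Finset.mem_coe.mpr hd.2) hbd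
  have Acd := ht1 (Finset.mem_coe.mpr hc.2) (Finset.mem_coe.mpr hd.2) hcd
  rw [Gm_adj] at Aab Aac Aad Abc Abd Acd
  have key : ∀ p q r s : Fin 5, B5 p q = true → B5 p r = true → B5 p s = true →
      B5 q r = true → B5 q s = true → B5 r s = true → False := by decide
  exact key _ _ _ _ Aab Aac Aad Abc Abd Acd

lemma not_cf (m : ℕ) (u v x y : Fin (66*m)) (huv : u ≠ v)
    (hxu : (Gm m).Adj x u) (hxv : (Gm m).Adj x v) (hyu : (Gm m).Adj y u)
    (hyv : (Gm m).Adj y v) (hxy : (Gm m).Adj x y) :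
    ¬ ((Gm m) ⊔ SimpleGraph.fromEdgeSet {s(u, v)}).CliqueFree 4 := by
  intro hcf
  set G' := (Gm m) ⊔ SimpleGraph.fromEdgeSet {s(u, v)} with hG'
  have hxu' : x ≠ u := hxu.ne
  have hxv' : x ≠ v := hxv.ne
  have hyu' : y ≠ u := hyu.ne
  have hyv' : y ≠ v := hyv.ne
  have hxy' : x ≠ y := hxy.ne
  have Auv : G'.Adj u v := (SimpleGraph.sup_adj _ _ _ _).mpr (Or.inr
    ((SimpleGraph.fromEdgeSet_adj _).mpr ⟨Set.mem_singleton _, huv⟩))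
  have Aux : G'.Adj u x := (SimpleGraph.sup_adj _ _ _ _).mpr (Or.inl hxu.symm)
  have Auy : G'.Adj u y := (SimpleGraph.sup_adj _ _ _ _).mpr (Or.inl hyu.symm)
  have Avx : G'.Adj v x := (SimpleGraph.sup_adj _ _ _ _).mpr (Or.inl hxv.symm)
  have Avy : G'.Adj v y := (SimpleGraph.sup_adj _ _ _ _).mpr (Or.inl hyv.symm)
  have Axy : G'.Adj x y := (SimpleGraph.sup_adj _ _ _ _).mpr (Or.inl hxy)
  apply hcf {u, v, x, y}
  constructor
  · intro a ha b hb hab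
    simp only [Finset.coe_insert, Set.mem_insert_iff, Finset.coe_singleton,
      Set.mem_singleton_iff] at ha hb
    rcases ha with rfl|rfl|rfl|rfl <;> rcases hb with rfl|rfl|rfl|rfl <;>
      first
        | exact absurd rfl hab
        | exact Auv | exact Auv.symm | exact Aux | exact Aux.symm | exact Auy | exact Auy.symm
        | exact Avx | exact Avx.symm | exact Avy | exact Avy.symm | exact Axy | exact Axy.symm
  · rw [Finset.card_insert_of_notMem (by
        simp only [Finset.mem_insert, Finset.mem_singleton]
        push_neg
        exact ⟨huv, hxu'.symm, hyu'.symm⟩),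
      Finset.card_insert_of_notMem (by
        simp only [Finset.mem_insert, Finset.mem_singleton]
        push_neg
        exact ⟨hxv'.symm, hyv'.symm⟩),
      Finset.card_pair hxy']


lemma B5_irrefl : ∀ j : Fin 5, B5 j j = false := by decide

lemma satEdge_iff (m : ℕ) (hm : 0 < m) (u v : Fin (66*m)) :
    SatEdge (Gm m) u v ↔ u ≠ v ∧ pt m u.val = pt m v.val ∧ (pt m u.val).val < 3 := by
  constructor
  · rintro ⟨hne, hnadj, hncf⟩
    refine ⟨hne, ?_⟩
    simp only [SimpleGraph.CliqueFree, not_forall, not_not] at hncf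
    obtain ⟨t, ht⟩ := hncf
    have key : ∀ a b : Fin (66*m),
        ((Gm m) ⊔ SimpleGraph.fromEdgeSet {s(u, v)}).Adj a b → s(a,b) ≠ s(u,v) →
        (Gm m).Adj a b := by
      intro a b hab hne2
      rcases (SimpleGraph.sup_adj _ _ _ _).mp hab with h | h
      · exact h
      · exact absurd (Set.mem_singleton_iff.mp ((SimpleGraph.fromEdgeSet_adj _).mp h).1) hne2
    have hu : u ∈ t := by
      by_contra hu
      refine Gm_free m t ⟨?_, ht.2⟩
      intro a ha b hb hab
      refine key a b (ht.1 ha hb hab) ?_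
      intro hs
      rcases Sym2.eq_iff.mp hs with ⟨rfl, rfl⟩ | ⟨rfl, rfl⟩
      · exact hu (Finset.mem_coe.mp ha)
      · exact hu (Finset.mem_coe.mp hb)
    have hv : v ∈ t := by
      by_contra hv
      refine Gm_free m t ⟨?_, ht.2⟩
      intro a ha b hb hab
      refine key a b (ht.1 ha hb hab) ?_
      intro hs
      rcases Sym2.eq_iff.mp hs with ⟨rfl, rfl⟩ | ⟨rfl, rfl⟩
      · exact hv (Finset.mem_coe.mp hb)
      · exact hv (Finset.mem_coe.mp ha)
    have h2 : (t.erase u).card = 3 := by rw [Finset.card_erase_of_mem hu, ht.2]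
    have hvu : v ∈ t.erase u := Finset.mem_erase.mpr ⟨hne.symm, hv⟩
    have h1 : ((t.erase u).erase v).card = 2 := by rw [Finset.card_erase_of_mem hvu, h2]
    obtain ⟨x, y, hxyne, hs⟩ := Finset.card_eq_two.mp h1
    have hx' : x ∈ (t.erase u).erase v := by rw [hs]; simp
    have hy' : y ∈ (t.erase u).erase v := by rw [hs]; simp
    obtain ⟨hxv, hx2⟩ := Finset.mem_erase.mp hx'
    obtain ⟨hxu, hxt⟩ := Finset.mem_erase.mp hx2
    obtain ⟨hyv, hy2⟩ := Finset.mem_erase.mp hy'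
    obtain ⟨hyu, hyt⟩ := Finset.mem_erase.mp hy2
    have Gxu : (Gm m).Adj x u := by
      refine key x u (ht.1 (Finset.mem_coe.mpr hxt) (Finset.mem_coe.mpr hu) hxu) ?_
      intro hs2
      rcases Sym2.eq_iff.mp hs2 with ⟨h1', h2'⟩ | ⟨h1', h2'⟩
      · exact hxu h1'
      · exact hxv h1'
    have Gxv : (Gm m).Adj x v := by
      refine key x v (ht.1 (Finset.mem_coe.mpr hxt) (Finset.mem_coe.mpr hv) hxv) ?_
      intro hs2
      rcases Sym2.eq_iff.mp hs2 with ⟨h1', h2'⟩ | ⟨h1', h2'⟩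
      · exact hxu h1'
      · exact hxv h1'
    have Gyu : (Gm m).Adj y u := by
      refine key y u (ht.1 (Finset.mem_coe.mpr hyt) (Finset.mem_coe.mpr hu) hyu) ?_
      intro hs2
      rcases Sym2.eq_iff.mp hs2 with ⟨h1', h2'⟩ | ⟨h1', h2'⟩
      · exact hyu h1'
      · exact hyv h1'
    have Gyv : (Gm m).Adj y v := by
      refine key y v (ht.1 (Finset.mem_coe.mpr hyt) (Finset.mem_coe.mpr hv) hyv) ?_
      intro hs2
      rcases Sym2.eq_iff.mp hs2 with ⟨h1', h2'⟩ | ⟨h1', h2'⟩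
      · exact hyu h1'
      · exact hyv h1'
    have Gxy : (Gm m).Adj x y := by
      refine key x y (ht.1 (Finset.mem_coe.mpr hxt) (Finset.mem_coe.mpr hyt) hxyne) ?_
      intro hs2
      rcases Sym2.eq_iff.mp hs2 with ⟨h1', h2'⟩ | ⟨h1', h2'⟩
      · exact hxu h1'
      · exact hxv h1'
    rw [Gm_adj] at Gxu Gxv Gyu Gyv Gxy
    have hB : B5 (pt m u.val) (pt m v.val) = false := by
      rw [Gm_adj] at hnadj
      simpa using hnadj
    have fin : ∀ pu pv px py : Fin 5, B5 px pu = true → B5 px pv = true →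
        B5 py pu = true → B5 py pv = true → B5 px py = true → B5 pu pv = false →
        pu = pv ∧ pu.val < 3 := by decide
    exact fin _ _ _ _ Gxu Gxv Gyu Gyv Gxy hB
  · rintro ⟨hne, heq, hlt⟩
    refine ⟨hne, ?_, ?_⟩
    · intro h
      rw [Gm_adj, heq] at h
      rw [B5_irrefl] at h
      exact Bool.false_ne_true h
    · have h3 := (show ∀ b : Fin 5, b.val < 3 → b = 0 ∨ b = 1 ∨ b = 2 by decide) _ hlt
      have r0 : Fin (66*m) := ⟨0, by omega⟩
      set x0 : Fin (66*m) := ⟨0, by omega⟩ with hx0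
      set x1 : Fin (66*m) := ⟨16*m, by omega⟩ with hx1
      set x2 : Fin (66*m) := ⟨20*m, by omega⟩ with hx2
      have p0 : pt m x0.val = 0 := by simp [pt, hx0, show (0:ℕ) < 16*m by omega]
      have p1 : pt m x1.val = 1 := by
        simp [pt, hx1, show ¬ (16*m < 16*m) by omega, show 16*m < 20*m by omega]
      have p2 : pt m x2.val = 2 := by
        simp [pt, hx2, show ¬ (20*m < 16*m) by omega, show ¬ (20*m < 20*m) by omega,
          show 20*m < 36*m by omega]
      have hvq : pt m v.val = pt m u.val := heq.symm
      rcases h3 with h | h | h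
      · refine not_cf m u v x1 x2 hne ?_ ?_ ?_ ?_ ?_ <;>
          rw [Gm_adj] <;> simp only [p1, p2, h, hvq ▸ h] <;> decide
      · refine not_cf m u v x0 x2 hne ?_ ?_ ?_ ?_ ?_ <;>
          rw [Gm_adj] <;> simp only [p0, p2, h, hvq ▸ h] <;> decide
      · refine not_cf m u v x0 x1 hne ?_ ?_ ?_ ?_ ?_ <;>
          rw [Gm_adj] <;> simp only [p0, p1, h, hvq ▸ h] <;> decide

lemma satset (m : ℕ) (hm : 0 < m) :
    {e : Sym2 (Fin (66*m)) | ∃ u v, e = s(u,v) ∧ SatEdge (Gm m) u v} = (Km m).edgeSet := by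
  ext e
  induction e using Sym2.ind with
  | _ a b =>
    simp only [Set.mem_setOf_eq, SimpleGraph.mem_edgeSet]
    constructor
    · rintro ⟨u, v, he, hsat⟩
      obtain ⟨h1, h2, h3⟩ := (satEdge_iff m hm u v).mp hsat
      have hK : (Km m).Adj u v := ⟨h1, h2, h3⟩
      rcases Sym2.eq_iff.mp he with ⟨rfl, rfl⟩ | ⟨rfl, rfl⟩
      · exact hK
      · exact hK.symm
    · intro h
      exact ⟨a, b, rfl, (satEdge_iff m hm a b).mpr ⟨h.1, h.2.1, h.2.2⟩⟩

lemma satCount_eq (m : ℕ) (hm : 0 < m) : satCount (Gm m) = (Km m).edgeFinset.card := by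
  rw [satCount, satset m hm, ← SimpleGraph.coe_edgeFinset, Set.ncard_coe_finset]

lemma two_satCount (m : ℕ) (hm : 0 < m) :
    2 * satCount (Gm m) = 16*m * (16*m - 1) + 4*m * (4*m - 1) + 16*m * (16*m - 1) := by
  rw [satCount_eq m hm, ← SimpleGraph.sum_degrees_eq_twice_card_edges, sum_degKm]

theorem stmt4 (n : ℕ) (hn : 0 < n) (h66 : 66 ∣ n) :
    ∃ H' : SimpleGraph (Fin n), H'.CliqueFree 4 ∧
      (∃ t : Finset (Fin n), H'.IsNClique 3 t) ∧
      H'.edgeSet.ncard = n ^ 2 / 4 ∧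
      (satCount H' : ℝ) = 2 * (n : ℝ) ^ 2 / 33 - 3 * n / 11 := by
  obtain ⟨m, rfl⟩ := h66
  have hm : 0 < m := by omega
  refine ⟨Gm m, Gm_free m, ?_, ?_, ?_⟩
  · -- triangle
    set x0 : Fin (66*m) := ⟨0, by omega⟩ with hx0
    set x1 : Fin (66*m) := ⟨16*m, by omega⟩ with hx1
    set x2 : Fin (66*m) := ⟨20*m, by omega⟩ with hx2
    have p0 : pt m x0.val = 0 := by simp [pt, hx0, show (0:ℕ) < 16*m by omega]
    have p1 : pt m x1.val = 1 := by
      simp [pt, hx1, show ¬ (16*m < 16*m) by omega, show 16*m < 20*m by omega]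
    have p2 : pt m x2.val = 2 := by
      simp [pt, hx2, show ¬ (20*m < 16*m) by omega, show ¬ (20*m < 20*m) by omega,
        show 20*m < 36*m by omega]
    have A01 : (Gm m).Adj x0 x1 := by rw [Gm_adj, p0, p1]; decide
    have A02 : (Gm m).Adj x0 x2 := by rw [Gm_adj, p0, p2]; decide
    have A12 : (Gm m).Adj x1 x2 := by rw [Gm_adj, p1, p2]; decide
    refine ⟨{x0, x1, x2}, ?_, ?_⟩
    · intro a ha b hb hab
      simp only [Finset.coe_insert, Set.mem_insert_iff, Finset.coe_singleton,
        Set.mem_singleton_iff] at ha hb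
      rcases ha with rfl|rfl|rfl <;> rcases hb with rfl|rfl|rfl <;>
        first
          | exact absurd rfl hab
          | exact A01 | exact A01.symm | exact A02 | exact A02.symm
          | exact A12 | exact A12.symm
    · rw [Finset.card_insert_of_notMem (by
          simp only [Finset.mem_insert, Finset.mem_singleton]
          push_neg
          exact ⟨A01.ne, A02.ne⟩),
        Finset.card_pair A12.ne]
  · -- edge count
    rw [← SimpleGraph.coe_edgeFinset, Set.ncard_coe_finset, edge_card_Gm]
    have : (66*m)^2 = 4 * (1089 * (m*m)) := by ring
    rw [this, Nat.mul_div_cancel_left _ (by norm_num : 0 < 4)]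
  · -- satCount
    have h2 := two_satCount m hm
    have hc1 : ((16*m - 1 : ℕ) : ℝ) = 16*m - 1 := by
      push_cast [Nat.cast_sub (by omega : 1 ≤ 16*m)]; ring
    have hc2 : ((4*m - 1 : ℕ) : ℝ) = 4*m - 1 := by
      push_cast [Nat.cast_sub (by omega : 1 ≤ 4*m)]; ring
    have hr : (2 : ℝ) * satCount (Gm m)
        = 16*m * (16*m - 1) + 4*m * (4*m - 1) + 16*m * (16*m - 1) := by
      calc (2 : ℝ) * satCount (Gm m)
          = ((2 * satCount (Gm m) : ℕ) : ℝ) := by push_cast; ring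
        _ = ((16*m * (16*m - 1) + 4*m * (4*m - 1) + 16*m * (16*m - 1) : ℕ) : ℝ) := by rw [h2]
        _ = 16*m * (16*m - 1) + 4*m * (4*m - 1) + 16*m * (16*m - 1) := by
            push_cast [hc1, hc2]; ring
    have := hr
    push_cast
    nlinarith [hr]
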